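/- Let A be a real n × n matrix. Then the supremum of trace(U * A) over all orthogonal n × n matrices U is attained, and this maximum equals the trace of the positive semidefinite square root of Aᵀ A, i.e. the sum of the singular values of A. -/

import Mathlib

open Matrix

noncomputable section

section OldSqrt

open scoped ComplexOrder

/-- The positive semidefinite square root, as defined in Mathlib (Dec 2024), since removed. -/
def Matrix.PosSemidef.sqrt {n : Type*} [Fintype n] [DecidableEq n] {𝕜 : Type*} [RCLike 𝕜]
    {A : Matrix n n 𝕜} (hA : A.PosSemidef) : Matrix n n 𝕜 :=
  hA.1.eigenvectorUnitary.1 * diagonal ((↑) ∘ (√·) ∘ hA.1.eigenvalues) *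
  (star hA.1.eigenvectorUnitary : Matrix n n 𝕜)

end OldSqrt

private lemma my_transpose_std {n : ℕ} (i j : Fin n) (c : ℝ) :
    (single i j c)ᵀ = single j i c := by
  ext a b
  simp [Matrix.single, Matrix.transpose_apply, and_comm]

private lemma my_trace_std_mul {n : ℕ} (i j : Fin n) (c : ℝ) (M : Matrix (Fin n) (Fin n) ℝ) :
    (single i j c * M).trace = c * M j i := by
  rw [Matrix.trace]
  rw [Finset.sum_eq_single i]
  · simp
  · intro k _ hk; simp [Matrix.diag, hk]
  · simp

private lemma rot_mem {n : ℕ} {i j : Fin n} (hij : i ≠ j) {c s : ℝ} (h : c ^ 2 + s ^ 2 = 1) :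
    (1 + single i i (c - 1) + single j j (c - 1)
      + single i j s + single j i (-s)) ∈ Matrix.orthogonalGroup (Fin n) ℝ := by
  have hji := hij.symm
  rw [Matrix.mem_unitaryGroup_iff']
  rw [Matrix.star_eq_conjTranspose, Matrix.conjTranspose_eq_transpose_of_trivial]
  simp only [Matrix.transpose_add, Matrix.transpose_one, my_transpose_std]
  simp only [Matrix.add_mul, Matrix.mul_add, Matrix.one_mul, Matrix.mul_one,
    Matrix.single_mul_single_same, Matrix.single_mul_single_of_ne, hij, hji,
    ne_eq, not_false_eq_true, add_zero, zero_add]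
  have hsmul : ∀ (a b : Fin n) (x : ℝ), single a b x = x • single a b 1 := by
    intro a b x; ext p q; simp [Matrix.single]
  rw [hsmul i i, hsmul j j, hsmul j i s, hsmul i j (-s), hsmul i i ((c-1)*(c-1)),
    hsmul j i (s*(c-1)), hsmul j j ((c-1)*(c-1)), hsmul i j (-s*(c-1)), hsmul i j s,
    hsmul i j ((c-1)*s), hsmul j j (s*s), hsmul j i (-s), hsmul j i ((c-1)* -s),
    hsmul i i (-s * -s)]
  match_scalars <;> linarith [h]

private lemma exists_max (n : ℕ) (A : Matrix (Fin n) (Fin n) ℝ) :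
    ∃ U ∈ Matrix.orthogonalGroup (Fin n) ℝ,
      ∀ V ∈ Matrix.orthogonalGroup (Fin n) ℝ, (V * A).trace ≤ (U * A).trace := by
  classical
  set G : Set (Matrix (Fin n) (Fin n) ℝ) := {V | V ∈ Matrix.orthogonalGroup (Fin n) ℝ}
  have hGclosed : IsClosed G := by
    have : G = (fun V : Matrix (Fin n) (Fin n) ℝ => star V * V) ⁻¹' {1} ∩
        (fun V : Matrix (Fin n) (Fin n) ℝ => V * star V) ⁻¹' {1} := by
      ext V
      simp only [G, Set.mem_setOf_eq, Set.mem_inter_iff, Set.mem_preimage, Set.mem_singleton_iff]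
      exact Unitary.mem_iff
    rw [this]
    exact ((isClosed_singleton.preimage (continuous_star.matrix_mul continuous_id))).inter
      (isClosed_singleton.preimage (continuous_id.matrix_mul continuous_star))
  have hGsub : G ⊆ Set.univ.pi (fun _ : Fin n => Set.univ.pi
      (fun _ : Fin n => Set.Icc (-1 : ℝ) 1)) := by
    intro V hV
    have h1 : star V * V = 1 := hV.1
    intro i _
    intro j _
    have hcol : ∑ k, V k j * V k j = 1 := by
      have := congrFun (congrFun h1 j) j
      simpa [Matrix.mul_apply, Matrix.one_apply] using this
    have hle : V i j * V i j ≤ 1 := by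
      rw [← hcol]
      exact Finset.single_le_sum (f := fun k => V k j * V k j)
        (fun k _ => mul_self_nonneg _) (Finset.mem_univ i)
    constructor <;> nlinarith
  have hGcompact : IsCompact G := by
    refine IsCompact.of_isClosed_subset ?_ hGclosed hGsub
    exact isCompact_univ_pi fun _ => isCompact_univ_pi fun _ => isCompact_Icc
  have hf : Continuous fun V : Matrix (Fin n) (Fin n) ℝ => (V * A).trace :=
    (continuous_id.matrix_mul continuous_const).matrix_trace
  obtain ⟨U, hUG, hmax⟩ := hGcompact.exists_isMaxOn
    ⟨1, show (1 : Matrix (Fin n) (Fin n) ℝ) ∈ Matrix.orthogonalGroup (Fin n) ℝ from one_mem _⟩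
    hf.continuousOn
  exact ⟨U, hUG, fun V hV => hmax hV⟩

/-- For a real `n × n` matrix `A`, the supremum of `trace (U * A)` over all
orthogonal matrices `U` is attained, and the maximum equals the trace of the positive
semidefinite square root of `Aᵀ * A` (the sum of the singular values of `A`). -/
theorem max_trace_orthogonal_mul
    (n : ℕ) (A : Matrix (Fin n) (Fin n) ℝ)
    (hA : (Aᵀ * A).PosSemidef) :
    ∃ U ∈ Matrix.orthogonalGroup (Fin n) ℝ,
      (∀ V ∈ Matrix.orthogonalGroup (Fin n) ℝ, (V * A).trace ≤ (U * A).trace) ∧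
      (U * A).trace = hA.sqrt.trace := by
  classical
  obtain ⟨U, hUG, hmax⟩ := exists_max n A
  refine ⟨U, hUG, fun V hV => hmax V hV, ?_⟩
  set M : Matrix (Fin n) (Fin n) ℝ := U * A with hM_def
  -- maximality over multiplications on the left
  have key : ∀ Q ∈ Matrix.orthogonalGroup (Fin n) ℝ, (Q * M).trace ≤ M.trace := by
    intro Q hQ
    have := hmax (Q * U) (mul_mem hQ hUG)
    rwa [mul_assoc] at this
  -- M is symmetric
  have hpair : ∀ i j : Fin n, i ≠ j → M j i = M i j := by
    intro i j hij
    set a : ℝ := M i i + M j j with ha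
    set b : ℝ := M j i - M i j with hb
    set r : ℝ := Real.sqrt (a ^ 2 + b ^ 2) with hr_def
    have hr2 : r ^ 2 = a ^ 2 + b ^ 2 := Real.sq_sqrt (by positivity)
    rcases eq_or_ne r 0 with hr | hr
    · have hab : a ^ 2 + b ^ 2 = 0 := by rw [← hr2, hr]; ring
      have hb0 : b = 0 := by nlinarith [sq_nonneg a, sq_nonneg b]
      rw [hb] at hb0; linarith
    · have hrpos : 0 < r := lt_of_le_of_ne (Real.sqrt_nonneg _) (Ne.symm hr)
      set c : ℝ := a / r with hc
      set s : ℝ := b / r with hs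
      have hcs : c ^ 2 + s ^ 2 = 1 := by
        rw [hc, hs, div_pow, div_pow, ← add_div, ← hr2, div_self (pow_ne_zero _ hr)]
      have hQG := rot_mem hij hcs
      have htr : ((1 + single i i (c - 1) + single j j (c - 1)
          + single i j s + single j i (-s)) * M).trace
          = M.trace + (c - 1) * M i i + (c - 1) * M j j + s * M j i + (-s) * M i j := by
        simp only [Matrix.add_mul, Matrix.one_mul, Matrix.trace_add, my_trace_std_mul]
      have hineq := key _ hQG
      rw [htr] at hineq
      have h2 : (c - 1) * a + s * b ≤ 0 := by rw [ha, hb]; ring_nf; ring_nf at hineq; linarith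
      have h3 : (a ^ 2 + b ^ 2) / r - a ≤ 0 := by
        rw [hc, hs] at h2
        have : (a / r - 1) * a + b / r * b = (a ^ 2 + b ^ 2) / r - a := by ring
        linarith [this ▸ h2]
      have h4 : r ≤ a := by
        rw [← hr2] at h3
        rw [pow_two] at h3
        rw [mul_div_assoc, div_self hr, mul_one] at h3
        linarith
      have hb2 : b ^ 2 ≤ 0 := by nlinarith
      have hb0 : b = 0 := by
        have := sq_nonneg b
        have : b ^ 2 = 0 := le_antisymm hb2 this
        exact (pow_eq_zero_iff two_ne_zero).mp this
      rw [hb] at hb0; linarith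
  have hsym : Mᵀ = M := by
    ext p q
    rw [Matrix.transpose_apply]
    rcases eq_or_ne p q with h | h
    · rw [h]
    · exact hpair p q h
  -- M is Hermitian
  have hM : M.IsHermitian := by
    rw [Matrix.IsHermitian, Matrix.conjTranspose_eq_transpose_of_trivial]
    exact hsym
  set V : Matrix (Fin n) (Fin n) ℝ := (hM.eigenvectorUnitary : Matrix (Fin n) (Fin n) ℝ)
    with hV_def
  set e : Fin n → ℝ := hM.eigenvalues with he_def
  have hVV : star V * V = 1 := hM.eigenvectorUnitary.2.1
  have hVV' : V * star V = 1 := hM.eigenvectorUnitary.2.2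
  have hspec : M = V * diagonal e * star V := by
    have := hM.spectral_theorem
    simpa using this
  -- eigenvalues are nonnegative
  have htraceM : M.trace = ∑ k, e k := by
    rw [hspec, Matrix.trace_mul_cycle, hVV, one_mul, Matrix.trace_diagonal]
  have henn : ∀ k, 0 ≤ e k := by
    set f : Fin n → ℝ := fun k => if e k < 0 then -1 else 1 with hf_def
    have hff : ∀ k, f k * f k = 1 := by
      intro k; rw [hf_def]; dsimp only; split <;> norm_num
    set F : Matrix (Fin n) (Fin n) ℝ := V * diagonal f * star V with hF_def
    have hFstar : star F = F := by
      rw [hF_def, StarMul.star_mul, StarMul.star_mul, star_star, Matrix.star_eq_conjTranspose (diagonal f),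
        Matrix.diagonal_conjTranspose]
      have : star f = f := by ext k; simp
      rw [this, mul_assoc]
    have hFF : F * F = 1 := by
      rw [hF_def]
      calc V * diagonal f * star V * (V * diagonal f * star V)
          = V * diagonal f * (star V * V) * diagonal f * star V := by
            simp only [mul_assoc]
        _ = V * (diagonal f * diagonal f) * star V := by rw [hVV]; simp only [mul_one, mul_assoc]
        _ = 1 := by
            rw [Matrix.diagonal_mul_diagonal]
            have : (fun k => f k * f k) = fun _ => (1 : ℝ) := funext hff
            rw [this, Matrix.diagonal_one, mul_one, hVV']
    have hFG : F ∈ Matrix.orthogonalGroup (Fin n) ℝ := by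
      rw [Matrix.mem_unitaryGroup_iff', hFstar]
      exact hFF
    have hFM : (F * M).trace = ∑ k, f k * e k := by
      rw [hF_def, hspec]
      calc (V * diagonal f * star V * (V * diagonal e * star V)).trace
          = (V * (diagonal f * diagonal e) * star V).trace := by
            rw [show V * diagonal f * star V * (V * diagonal e * star V)
              = V * diagonal f * (star V * V) * diagonal e * star V by simp only [mul_assoc],
              hVV]
            simp only [mul_one, mul_assoc]
        _ = ∑ k, f k * e k := by
            rw [Matrix.trace_mul_cycle, ← mul_assoc, hVV, one_mul,
              Matrix.diagonal_mul_diagonal, Matrix.trace_diagonal]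
    have hsumabs : (∑ k, |e k|) ≤ ∑ k, e k := by
      have := key F hFG
      rw [hFM, htraceM] at this
      calc (∑ k, |e k|) = ∑ k, f k * e k := by
            refine Finset.sum_congr rfl fun k _ => ?_
            rw [hf_def]; dsimp only; split
            · rw [abs_of_neg (by assumption)]; ring
            · rw [abs_of_nonneg (by linarith [not_lt.mp (by assumption)])]; ring
        _ ≤ ∑ k, e k := this
    intro k
    by_contra hneg
    push_neg at hneg
    have h1 : ∀ k, e k ≤ |e k| := fun k => le_abs_self _
    have : (∑ k, e k) < ∑ k, |e k| := by
      apply Finset.sum_lt_sum (fun k _ => h1 k)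
      exact ⟨k, Finset.mem_univ k, by rw [abs_of_neg hneg]; linarith⟩
    linarith
  -- M is PSD
  have hMpsd : M.PosSemidef := by
    rw [hspec, Matrix.star_eq_conjTranspose]
    exact (Matrix.posSemidef_diagonal_iff.mpr henn).mul_mul_conjTranspose_same V
  -- M squared equals AᵀA
  have hUtU : Uᵀ * U = 1 := by
    have := hUG.1
    rwa [Matrix.star_eq_conjTranspose, Matrix.conjTranspose_eq_transpose_of_trivial] at this
  have hsq : M ^ 2 = Aᵀ * A := by
    rw [pow_two]
    nth_rewrite 1 [← hsym]
    rw [hM_def, Matrix.transpose_mul, mul_assoc, ← mul_assoc Uᵀ U A, hUtU, one_mul]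
  have hfinal : M = hA.sqrt := by
    open scoped MatrixOrder in
    have h1 : CFC.sqrt (Aᵀ * A) = M :=
      CFC.sqrt_unique (by rw [← hsq, pow_two]) (Matrix.nonneg_iff_posSemidef.mpr hMpsd)
    open scoped MatrixOrder in
    rw [← h1, CFC.sqrt_eq_cfc, cfc_nnreal_eq_real _ _ (Matrix.nonneg_iff_posSemidef.mpr hA),
      hA.1.cfc_eq]
    unfold Matrix.PosSemidef.sqrt IsHermitian.cfc
    rw [Unitary.conjStarAlgAut_apply]
    have hsqrt : (fun x : ℝ => ((NNReal.sqrt x.toNNReal : NNReal) : ℝ)) = fun x => √x := by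
      funext x
      rw [Real.coe_sqrt, Real.coe_toNNReal']
      rcases le_total 0 x with h | h
      · rw [max_eq_left h]
      · rw [max_eq_right h, Real.sqrt_zero, Real.sqrt_eq_zero'.mpr h]
    rw [hsqrt]
  rw [← hfinal]
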